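/- arXiv:2309.00370 — 2 statements merged into one kernel-verified Lean document; each statement's English description precedes it below -/
import Mathlib

section
/- If p ≥ 0 and φ ∈ I_o(−p,0), then ∫_0^∞ (min(1, t/x))^p φ(t) dt/t ≲ φ(x) for all x > 0. -/
open Real MeasureTheory Set Filter ENNReal

/-- `s_φ(λ) = sup_{t>0} φ(λt)/φ(t)`, valued in `[0,∞]`. -/
noncomputable def sPhi (φ : ℝ → ℝ) (l : ℝ) : ℝ≥0∞ :=
  ⨆ t ∈ Set.Ioi (0:ℝ), ENNReal.ofReal (φ (l * t) / φ t)

lemma le_sPhi (φ : ℝ → ℝ) (l : ℝ) {t : ℝ} (ht : 0 < t) :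
    ENNReal.ofReal (φ (l * t) / φ t) ≤ sPhi φ l :=
  le_iSup₂ (f := fun t _ => ENNReal.ofReal (φ (l * t) / φ t)) t ht

lemma ofReal_apply_le (φ : ℝ → ℝ) (hφ : ∀ t ∈ Set.Ioi (0:ℝ), 0 < φ t)
    (l t : ℝ) (hl : 0 < l) (ht : 0 < t) :
    ENNReal.ofReal (φ (l * t)) ≤ sPhi φ l * ENNReal.ofReal (φ t) := by
  have hφt : 0 < φ t := hφ t ht
  have hφlt : 0 < φ (l * t) := hφ _ (mul_pos hl ht)
  have h1 : φ (l * t) = φ (l * t) / φ t * φ t := (div_mul_cancel₀ _ hφt.ne').symm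
  rw [h1, ENNReal.ofReal_mul (div_nonneg hφlt.le hφt.le)]
  exact mul_le_mul_left (le_sPhi φ l ht) _

lemma sPhi_mul_le (φ : ℝ → ℝ) (hφ : ∀ t ∈ Set.Ioi (0:ℝ), 0 < φ t)
    (a b : ℝ) (ha : 0 < a) (hb : 0 < b) :
    sPhi φ (a * b) ≤ sPhi φ a * sPhi φ b := by
  refine iSup₂_le fun t ht => ?_
  have ht' : (0:ℝ) < t := ht
  have hbt : 0 < b * t := mul_pos hb ht'
  have hφbt : 0 < φ (b * t) := hφ _ hbt
  have hφabt : 0 < φ (a * (b * t)) := hφ _ (mul_pos ha hbt)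
  have h1 : φ (a * b * t) / φ t = φ (a * (b * t)) / φ (b * t) * (φ (b * t) / φ t) := by
    rw [mul_assoc]; field_simp
  rw [h1, ENNReal.ofReal_mul (div_nonneg hφabt.le hφbt.le)]
  exact mul_le_mul' (le_sPhi φ a hbt) (le_sPhi φ b ht')

lemma sPhi_one_le (φ : ℝ → ℝ) (hφ : ∀ t ∈ Set.Ioi (0:ℝ), 0 < φ t) : sPhi φ 1 ≤ 1 :=
  iSup₂_le fun t ht => by
    rw [one_mul, div_self (hφ t ht).ne']; simp

/-- `φ ∈ I(a,b)`: `s_φ(λ) = O(λ^a)` as `λ → 0` and `s_φ(λ) = O(λ^b)` as `λ → ∞`. -/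
def memI (φ : ℝ → ℝ) (a b : ℝ) : Prop :=
  (∃ C > (0:ℝ), ∃ δ > (0:ℝ), ∀ l : ℝ, 0 < l → l < δ →
    sPhi φ l ≤ ENNReal.ofReal (C * l ^ a)) ∧
  (∃ C > (0:ℝ), ∃ M : ℝ, ∀ l : ℝ, M < l →
    sPhi φ l ≤ ENNReal.ofReal (C * l ^ b))

/-- `φ ∈ I_o(a,b)`: `s_φ(λ) = o(λ^a)` as `λ → 0` and `s_φ(λ) = o(λ^b)` as `λ → ∞`. -/
def memIo (φ : ℝ → ℝ) (a b : ℝ) : Prop :=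
  (∀ ε > (0:ℝ), ∃ δ > (0:ℝ), ∀ l : ℝ, 0 < l → l < δ →
    sPhi φ l ≤ ENNReal.ofReal (ε * l ^ a)) ∧
  (∀ ε > (0:ℝ), ∃ M : ℝ, ∀ l : ℝ, M < l →
    sPhi φ l ≤ ENNReal.ofReal (ε * l ^ b))

set_option maxHeartbeats 2000000 in
/-- if `p ≥ 0` and `φ ∈ I_o(−p,0)`, then
`∫_0^∞ (min(1, t/x))^p φ(t) dt/t ≲ φ(x)` uniformly in `x > 0`. -/
theorem lintegral_min_rpow_le_of_memIo_neg (p : ℝ) (hp : 0 ≤ p)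
    (φ : ℝ → ℝ) (hφ : ∀ t ∈ Set.Ioi (0:ℝ), 0 < φ t) (h : memIo φ (-p) 0) :
    ∃ C > (0:ℝ), ∀ x > (0:ℝ),
      ∫⁻ t in Set.Ioi (0:ℝ), ENNReal.ofReal ((min 1 (t / x)) ^ p * φ t / t) ≤
        ENNReal.ofReal (C * φ x) := by
  obtain ⟨h0, hinf⟩ := h
  obtain ⟨δ, hδpos, hδ⟩ := h0 (1/2) (by norm_num)
  obtain ⟨M, hM⟩ := hinf (1/2) (by norm_num)
  set l₁ : ℝ := max M 1 + 1 with hl₁def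
  have hl₁gt1 : 1 < l₁ := by
    have := le_max_right M 1; simp only [hl₁def]; linarith
  have hl₁pos : 0 < l₁ := by linarith
  have hsl₁ : sPhi φ l₁ ≤ ENNReal.ofReal (1/2) := by
    have h1 := hM l₁ (by have := le_max_left M 1; simp only [hl₁def]; linarith)
    simpa [Real.rpow_zero] using h1
  set l₀ : ℝ := min δ 1 / 2 with hl₀def
  have hl₀pos : 0 < l₀ := by
    have : 0 < min δ 1 := lt_min hδpos one_pos
    simp only [hl₀def]; linarith
  have hl₀ltδ : l₀ < δ := by
    have h1 : min δ 1 ≤ δ := min_le_left _ _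
    have : 0 < min δ 1 := lt_min hδpos one_pos
    simp only [hl₀def]; linarith
  have hl₀lt1 : l₀ < 1 := by
    have h1 : min δ 1 ≤ 1 := min_le_right _ _
    have : 0 < min δ 1 := lt_min hδpos one_pos
    simp only [hl₀def]; linarith
  have hsl₀ : sPhi φ l₀ ≤ ENNReal.ofReal (1/2 * l₀ ^ (-p)) := hδ l₀ hl₀pos hl₀ltδ
  -- powers
  have hpow1 : ∀ k : ℕ, sPhi φ (l₁ ^ k) ≤ ENNReal.ofReal ((1/2 : ℝ) ^ k) := by
    intro k; induction k with
    | zero => simpa using sPhi_one_le φ hφ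
    | succ k ih =>
      calc sPhi φ (l₁ ^ (k+1)) = sPhi φ (l₁ ^ k * l₁) := by rw [pow_succ]
        _ ≤ sPhi φ (l₁ ^ k) * sPhi φ l₁ := sPhi_mul_le φ hφ _ _ (pow_pos hl₁pos k) hl₁pos
        _ ≤ ENNReal.ofReal ((1/2 : ℝ)^k) * ENNReal.ofReal (1/2) := mul_le_mul' ih hsl₁
        _ = ENNReal.ofReal ((1/2 : ℝ)^(k+1)) := by
            rw [← ENNReal.ofReal_mul (by positivity), pow_succ]
  have hpow0 : ∀ k : ℕ,
      sPhi φ (l₀ ^ k) ≤ ENNReal.ofReal ((1/2 : ℝ) ^ k * (l₀ ^ k) ^ (-p)) := by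
    intro k; induction k with
    | zero => simpa using sPhi_one_le φ hφ
    | succ k ih =>
      calc sPhi φ (l₀ ^ (k+1)) = sPhi φ (l₀ ^ k * l₀) := by rw [pow_succ]
        _ ≤ sPhi φ (l₀ ^ k) * sPhi φ l₀ := sPhi_mul_le φ hφ _ _ (pow_pos hl₀pos k) hl₀pos
        _ ≤ ENNReal.ofReal ((1/2 : ℝ)^k * (l₀ ^ k) ^ (-p)) * ENNReal.ofReal (1/2 * l₀ ^ (-p)) :=
            mul_le_mul' ih hsl₀
        _ = ENNReal.ofReal ((1/2 : ℝ)^(k+1) * (l₀ ^ (k+1)) ^ (-p)) := by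
            rw [← ENNReal.ofReal_mul (by positivity)]
            congr 1
            rw [pow_succ (l₀) k, Real.mul_rpow (by positivity) hl₀pos.le]
            ring
  -- choice of m
  obtain ⟨m, hm⟩ : ∃ m : ℕ, l₁ / δ < l₁ ^ m := pow_unbounded_of_one_lt _ hl₁gt1
  have hm' : l₁ / l₁ ^ m < δ := by
    rw [div_lt_iff₀ (by positivity)]
    rw [div_lt_iff₀ hδpos] at hm
    linarith [hm]
  set K : ℝ := 1/2 * (l₁ ^ m) ^ p * (1/2 : ℝ) ^ m with hKdef
  have hKpos : 0 < K := by positivity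
  -- mid-range bound
  have hmid : ∀ c : ℝ, 0 < c → ∀ ν : ℝ, c < ν → ν ≤ l₁ →
      sPhi φ ν ≤ ENNReal.ofReal (K * c ^ (-p)) := by
    intro c hc ν hcν hνl₁
    have hν : 0 < ν := hc.trans hcν
    have hwpos : 0 < ν / l₁ ^ m := by positivity
    have hwδ : ν / l₁ ^ m < δ :=
      lt_of_le_of_lt (by gcongr) hm'
    have h1 := hδ _ hwpos hwδ
    have h2 : (ν / l₁ ^ m) ^ (-p) ≤ c ^ (-p) * (l₁ ^ m) ^ p := by
      have hlt : c / l₁ ^ m < ν / l₁ ^ m := by gcongr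
      calc (ν / l₁ ^ m) ^ (-p) ≤ (c / l₁ ^ m) ^ (-p) :=
            Real.rpow_le_rpow_of_nonpos (by positivity) hlt.le (neg_nonpos.mpr hp)
        _ = c ^ (-p) * (l₁ ^ m) ^ p := by
            rw [Real.div_rpow hc.le (by positivity), Real.rpow_neg (by positivity : (0:ℝ) ≤ l₁ ^ m)]
            field_simp
    have hw : ν = ν / l₁ ^ m * l₁ ^ m := by field_simp
    calc sPhi φ ν = sPhi φ (ν / l₁ ^ m * l₁ ^ m) := by rw [← hw]
      _ ≤ sPhi φ (ν / l₁ ^ m) * sPhi φ (l₁ ^ m) :=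
          sPhi_mul_le φ hφ _ _ hwpos (by positivity)
      _ ≤ ENNReal.ofReal (1/2 * (ν / l₁ ^ m) ^ (-p)) * ENNReal.ofReal ((1/2 : ℝ) ^ m) :=
          mul_le_mul' h1 (hpow1 m)
      _ ≤ ENNReal.ofReal (K * c ^ (-p)) := by
          rw [← ENNReal.ofReal_mul (by positivity)]
          apply ENNReal.ofReal_le_ofReal
          have h3 : (0:ℝ) ≤ (1/2 : ℝ) ^ m := by positivity
          calc 1/2 * (ν / l₁ ^ m) ^ (-p) * (1/2 : ℝ) ^ m
              ≤ 1/2 * (c ^ (-p) * (l₁ ^ m) ^ p) * (1/2 : ℝ) ^ m := by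
                have : (0:ℝ) ≤ (ν / l₁ ^ m) ^ (-p) := by positivity
                nlinarith
            _ = K * c ^ (-p) := by rw [hKdef]; ring
  set CA : ℝ := K * l₀ ^ (-p) * ((1 - l₀)/l₀) with hCAdef
  set CB : ℝ := K * (l₁ - 1) with hCBdef
  have h1l₀ : (0:ℝ) < 1 - l₀ := by linarith
  have hCApos : 0 < CA := by
    have h2 : (0:ℝ) < l₀ ^ (-p) := Real.rpow_pos_of_pos hl₀pos _
    exact mul_pos (mul_pos hKpos h2) (div_pos h1l₀ hl₀pos)
  have hCBpos : 0 < CB := mul_pos hKpos (by linarith)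
  refine ⟨2*CA + 2*CB, by linarith, ?_⟩
  intro x hx
  have hφx : 0 < φ x := hφ x hx
  -- covering of (0, ∞)
  have cover : Set.Ioi (0:ℝ) ⊆
      (⋃ n : ℕ, Set.Ioc (x*l₀^(n+1)) (x*l₀^n)) ∪ ⋃ n : ℕ, Set.Ioc (x*l₁^n) (x*l₁^(n+1)) := by
    intro t ht
    have ht' : (0:ℝ) < t := ht
    rcases le_or_gt t x with hle | hlt
    · left
      have hex : ∃ n : ℕ, x * l₀ ^ (n+1) < t := by
        obtain ⟨k, hk⟩ := exists_pow_lt_of_lt_one (div_pos ht' hx) hl₀lt1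
        refine ⟨k, ?_⟩
        rw [lt_div_iff₀ hx] at hk
        have hkk : l₀ ^ (k+1) ≤ l₀ ^ k :=
          pow_le_pow_of_le_one hl₀pos.le hl₀lt1.le (Nat.le_succ k)
        nlinarith
      refine Set.mem_iUnion.mpr ⟨Nat.find hex, Nat.find_spec hex, ?_⟩
      rcases Nat.eq_zero_or_pos (Nat.find hex) with h0' | h0'
      · rw [h0']; simpa using hle
      · obtain ⟨k, hk⟩ := Nat.exists_eq_succ_of_ne_zero h0'.ne'
        rw [hk]
        have := Nat.find_min hex (by omega : k < Nat.find hex)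
        rw [hk] at *
        push_neg at this
        exact this
    · right
      have hex : ∃ n : ℕ, t ≤ x * l₁ ^ (n+1) := by
        obtain ⟨k, hk⟩ := pow_unbounded_of_one_lt (t/x) hl₁gt1
        refine ⟨k, ?_⟩
        rw [div_lt_iff₀ hx] at hk
        have hkk : l₁ ^ k ≤ l₁ ^ (k+1) := pow_le_pow_right₀ hl₁gt1.le (Nat.le_succ k)
        nlinarith
      refine Set.mem_iUnion.mpr ⟨Nat.find hex, ?_, Nat.find_spec hex⟩
      rcases Nat.eq_zero_or_pos (Nat.find hex) with h0' | h0'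
      · rw [h0']; simpa using hlt
      · obtain ⟨k, hk⟩ := Nat.exists_eq_succ_of_ne_zero h0'.ne'
        rw [hk]
        have := Nat.find_min hex (by omega : k < Nat.find hex)
        push_neg at this
        exact this
  -- geometric sum
  have hgeom : ∀ c : ℝ, 0 ≤ c →
      ∑' n : ℕ, ENNReal.ofReal (c * (1/2:ℝ)^n) = ENNReal.ofReal (c * 2) := by
    intro c hc
    rw [← ENNReal.ofReal_tsum_of_nonneg (fun n => by positivity)
      ((summable_geometric_of_lt_one (by norm_num) (by norm_num)).mul_left c)]
    congr 1
    rw [tsum_mul_left, tsum_geometric_of_lt_one (by norm_num) (by norm_num : (1/2:ℝ) < 1)]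
    norm_num
  -- bound on small-t pieces
  have hA : ∀ n : ℕ, (∫⁻ t in Set.Ioc (x*l₀^(n+1)) (x*l₀^n),
        ENNReal.ofReal ((min 1 (t / x)) ^ p * φ t / t)) ≤
      ENNReal.ofReal (CA * φ x * (1/2:ℝ)^n) := by
    intro n
    have hxl : (0:ℝ) < x * l₀^(n+1) := by positivity
    set G : ℝ := K * l₀ ^ (-p) * ((1/2:ℝ)^n * (l₀ ^ n) ^ (-p)) with hGdef
    have hGpos : 0 < G := by
      have := Real.rpow_pos_of_pos hl₀pos (-p)
      have := Real.rpow_pos_of_pos (pow_pos hl₀pos n) (-p)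
      positivity
    set R : ℝ := (l₀^n) ^ p * G * φ x * (x*l₀^(n+1))⁻¹ with hRdef
    have hRnn : 0 ≤ R := by positivity
    have hpt : ∀ t ∈ Set.Ioc (x*l₀^(n+1)) (x*l₀^n),
        ENNReal.ofReal ((min 1 (t / x)) ^ p * φ t / t) ≤ ENNReal.ofReal R := by
      rintro t ⟨ht1, ht2⟩
      have ht' : (0:ℝ) < t := hxl.trans ht1
      have hφt : 0 < φ t := hφ t ht'
      have hmin0 : (0:ℝ) ≤ min 1 (t/x) := le_min zero_le_one (by positivity)
      have hminle : min 1 (t/x) ≤ l₀^n := by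
        refine le_trans (min_le_right _ _) ?_
        rw [div_le_iff₀ hx]; linarith
      -- bound φ t
      have hν1 : l₀ < t/(x*l₀^n) := by
        rw [lt_div_iff₀ (by positivity)]
        have hps : x * l₀^(n+1) = l₀ * (x * l₀^n) := by rw [pow_succ]; ring
        linarith [hps ▸ ht1]
      have hν2 : t/(x*l₀^n) ≤ l₁ := by
        refine le_trans ?_ hl₁gt1.le
        rw [div_le_one (by positivity)]; linarith
      have hdm : t/x = t/(x*l₀^n) * l₀^n := by field_simp
      have h6 : sPhi φ (t/x) ≤ ENNReal.ofReal G := by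
        calc sPhi φ (t/x) = sPhi φ (t/(x*l₀^n) * l₀^n) := by rw [← hdm]
          _ ≤ sPhi φ (t/(x*l₀^n)) * sPhi φ (l₀^n) :=
              sPhi_mul_le φ hφ _ _ (hl₀pos.trans hν1) (by positivity)
          _ ≤ ENNReal.ofReal (K * l₀ ^ (-p)) * ENNReal.ofReal ((1/2:ℝ)^n * (l₀ ^ n) ^ (-p)) :=
              mul_le_mul' (hmid l₀ hl₀pos _ hν1 hν2) (hpow0 n)
          _ = ENNReal.ofReal G := by
              rw [hGdef, ← ENNReal.ofReal_mul (by positivity)]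
      have h4 : ENNReal.ofReal (φ t) ≤ sPhi φ (t/x) * ENNReal.ofReal (φ x) := by
        have h5 := ofReal_apply_le φ hφ (t/x) x (by positivity) hx
        rwa [div_mul_cancel₀ _ hx.ne'] at h5
      have hφt_le : φ t ≤ G * φ x := by
        have h7 : ENNReal.ofReal (φ t) ≤ ENNReal.ofReal (G * φ x) := by
          calc ENNReal.ofReal (φ t) ≤ sPhi φ (t/x) * ENNReal.ofReal (φ x) := h4
            _ ≤ ENNReal.ofReal G * ENNReal.ofReal (φ x) := mul_le_mul_left h6 _
            _ = ENNReal.ofReal (G * φ x) := (ENNReal.ofReal_mul hGpos.le).symm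
        exact (ENNReal.ofReal_le_ofReal_iff (by positivity)).mp h7
      apply ENNReal.ofReal_le_ofReal
      have hinv : t⁻¹ ≤ (x*l₀^(n+1))⁻¹ := by
        apply inv_anti₀ hxl ht1.le
      calc (min 1 (t/x)) ^ p * φ t / t = (min 1 (t/x)) ^ p * φ t * t⁻¹ := by
            rw [div_eq_mul_inv]
        _ ≤ (l₀^n) ^ p * (G * φ x) * (x*l₀^(n+1))⁻¹ := by
            apply mul_le_mul _ hinv (by positivity) (by positivity)
            exact mul_le_mul (Real.rpow_le_rpow hmin0 hminle hp) hφt_le hφt.le (by positivity)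
        _ = R := by rw [hRdef]; ring
    calc (∫⁻ t in Set.Ioc (x*l₀^(n+1)) (x*l₀^n),
          ENNReal.ofReal ((min 1 (t / x)) ^ p * φ t / t))
        ≤ ∫⁻ _ in Set.Ioc (x*l₀^(n+1)) (x*l₀^n), ENNReal.ofReal R :=
          setLIntegral_mono measurable_const hpt
      _ = ENNReal.ofReal R * volume (Set.Ioc (x*l₀^(n+1)) (x*l₀^n)) := setLIntegral_const _ _
      _ = ENNReal.ofReal (R * (x*l₀^n - x*l₀^(n+1))) := by
          rw [Real.volume_Ioc, ← ENNReal.ofReal_mul hRnn]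
      _ ≤ ENNReal.ofReal (CA * φ x * (1/2:ℝ)^n) := by
          apply ENNReal.ofReal_le_ofReal
          have hkey : R * (x*l₀^n - x*l₀^(n+1)) = CA * φ x * (1/2:ℝ)^n := by
            rw [hRdef, hGdef, hCAdef]
            rw [Real.rpow_neg hl₀pos.le, Real.rpow_neg (pow_pos hl₀pos n).le]
            have hu : (l₀^n : ℝ) ^ p ≠ 0 := (Real.rpow_pos_of_pos (pow_pos hl₀pos n) p).ne'
            have hv : (l₀ : ℝ) ^ p ≠ 0 := (Real.rpow_pos_of_pos hl₀pos p).ne'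
            rw [pow_succ]
            field_simp
          rw [hkey]
  -- bound on large-t pieces
  have hB : ∀ n : ℕ, (∫⁻ t in Set.Ioc (x*l₁^n) (x*l₁^(n+1)),
        ENNReal.ofReal ((min 1 (t / x)) ^ p * φ t / t)) ≤
      ENNReal.ofReal (CB * φ x * (1/2:ℝ)^n) := by
    intro n
    have hxl : (0:ℝ) < x * l₁^n := by positivity
    set G : ℝ := K * ((1/2:ℝ)^n) with hGdef
    have hGpos : 0 < G := by positivity
    set R : ℝ := G * φ x * (x*l₁^n)⁻¹ with hRdef
    have hRnn : 0 ≤ R := by positivity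
    have hpt : ∀ t ∈ Set.Ioc (x*l₁^n) (x*l₁^(n+1)),
        ENNReal.ofReal ((min 1 (t / x)) ^ p * φ t / t) ≤ ENNReal.ofReal R := by
      rintro t ⟨ht1, ht2⟩
      have ht' : (0:ℝ) < t := hxl.trans ht1
      have hφt : 0 < φ t := hφ t ht'
      have hmin0 : (0:ℝ) ≤ min 1 (t/x) := le_min zero_le_one (by positivity)
      have hminle : min 1 (t/x) ≤ 1 := min_le_left _ _
      have hν1 : (1:ℝ) < t/(x*l₁^n) := by
        rw [lt_div_iff₀ (by positivity)]; linarith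
      have hν2 : t/(x*l₁^n) ≤ l₁ := by
        rw [div_le_iff₀ (by positivity)]
        have hps : x * l₁^(n+1) = l₁ * (x * l₁^n) := by rw [pow_succ]; ring
        linarith [hps ▸ ht2]
      have hdm : t/x = t/(x*l₁^n) * l₁^n := by field_simp
      have h6 : sPhi φ (t/x) ≤ ENNReal.ofReal G := by
        calc sPhi φ (t/x) = sPhi φ (t/(x*l₁^n) * l₁^n) := by rw [← hdm]
          _ ≤ sPhi φ (t/(x*l₁^n)) * sPhi φ (l₁^n) :=
              sPhi_mul_le φ hφ _ _ (one_pos.trans hν1) (by positivity)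
          _ ≤ ENNReal.ofReal (K * (1:ℝ) ^ (-p)) * ENNReal.ofReal ((1/2:ℝ)^n) :=
              mul_le_mul' (hmid 1 one_pos _ hν1 hν2) (hpow1 n)
          _ = ENNReal.ofReal G := by
              rw [Real.one_rpow, mul_one, hGdef, ENNReal.ofReal_mul hKpos.le]
      have h4 : ENNReal.ofReal (φ t) ≤ sPhi φ (t/x) * ENNReal.ofReal (φ x) := by
        have h5 := ofReal_apply_le φ hφ (t/x) x (by positivity) hx
        rwa [div_mul_cancel₀ _ hx.ne'] at h5
      have hφt_le : φ t ≤ G * φ x := by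
        have h7 : ENNReal.ofReal (φ t) ≤ ENNReal.ofReal (G * φ x) := by
          calc ENNReal.ofReal (φ t) ≤ sPhi φ (t/x) * ENNReal.ofReal (φ x) := h4
            _ ≤ ENNReal.ofReal G * ENNReal.ofReal (φ x) := mul_le_mul_left h6 _
            _ = ENNReal.ofReal (G * φ x) := (ENNReal.ofReal_mul hGpos.le).symm
        exact (ENNReal.ofReal_le_ofReal_iff (by positivity)).mp h7
      apply ENNReal.ofReal_le_ofReal
      have hinv : t⁻¹ ≤ (x*l₁^n)⁻¹ := by
        apply inv_anti₀ hxl ht1.le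
      calc (min 1 (t/x)) ^ p * φ t / t = (min 1 (t/x)) ^ p * φ t * t⁻¹ := by
            rw [div_eq_mul_inv]
        _ ≤ 1 * (G * φ x) * (x*l₁^n)⁻¹ := by
            apply mul_le_mul _ hinv (by positivity) (by positivity)
            have h8 : (min 1 (t/x)) ^ p ≤ 1 := by
              calc (min 1 (t/x)) ^ p ≤ (1:ℝ) ^ p := Real.rpow_le_rpow hmin0 hminle hp
                _ = 1 := Real.one_rpow p
            exact mul_le_mul h8 hφt_le hφt.le zero_le_one
        _ = R := by rw [hRdef]; ring
    calc (∫⁻ t in Set.Ioc (x*l₁^n) (x*l₁^(n+1)),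
          ENNReal.ofReal ((min 1 (t / x)) ^ p * φ t / t))
        ≤ ∫⁻ _ in Set.Ioc (x*l₁^n) (x*l₁^(n+1)), ENNReal.ofReal R :=
          setLIntegral_mono measurable_const hpt
      _ = ENNReal.ofReal R * volume (Set.Ioc (x*l₁^n) (x*l₁^(n+1))) := setLIntegral_const _ _
      _ = ENNReal.ofReal (R * (x*l₁^(n+1) - x*l₁^n)) := by
          rw [Real.volume_Ioc, ← ENNReal.ofReal_mul hRnn]
      _ ≤ ENNReal.ofReal (CB * φ x * (1/2:ℝ)^n) := by
          apply ENNReal.ofReal_le_ofReal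
          have hkey : R * (x*l₁^(n+1) - x*l₁^n) = CB * φ x * (1/2:ℝ)^n := by
            rw [hRdef, hGdef, hCBdef, pow_succ]
            field_simp
          rw [hkey]
  calc (∫⁻ t in Set.Ioi (0:ℝ), ENNReal.ofReal ((min 1 (t / x)) ^ p * φ t / t))
      ≤ ∫⁻ t in ((⋃ n : ℕ, Set.Ioc (x*l₀^(n+1)) (x*l₀^n)) ∪
          ⋃ n : ℕ, Set.Ioc (x*l₁^n) (x*l₁^(n+1))),
          ENNReal.ofReal ((min 1 (t / x)) ^ p * φ t / t) := lintegral_mono_set cover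
    _ ≤ (∫⁻ t in (⋃ n : ℕ, Set.Ioc (x*l₀^(n+1)) (x*l₀^n)),
          ENNReal.ofReal ((min 1 (t / x)) ^ p * φ t / t)) +
        ∫⁻ t in (⋃ n : ℕ, Set.Ioc (x*l₁^n) (x*l₁^(n+1))),
          ENNReal.ofReal ((min 1 (t / x)) ^ p * φ t / t) := lintegral_union_le _ _ _
    _ ≤ (∑' n : ℕ, ∫⁻ t in Set.Ioc (x*l₀^(n+1)) (x*l₀^n),
          ENNReal.ofReal ((min 1 (t / x)) ^ p * φ t / t)) +
        ∑' n : ℕ, ∫⁻ t in Set.Ioc (x*l₁^n) (x*l₁^(n+1)),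
          ENNReal.ofReal ((min 1 (t / x)) ^ p * φ t / t) :=
        add_le_add (lintegral_iUnion_le _ _) (lintegral_iUnion_le _ _)
    _ ≤ (∑' n : ℕ, ENNReal.ofReal (CA * φ x * (1/2:ℝ)^n)) +
        ∑' n : ℕ, ENNReal.ofReal (CB * φ x * (1/2:ℝ)^n) :=
        add_le_add (ENNReal.tsum_le_tsum hA) (ENNReal.tsum_le_tsum hB)
    _ = ENNReal.ofReal (CA * φ x * 2) + ENNReal.ofReal (CB * φ x * 2) := by
        rw [hgeom (CA * φ x) (by positivity), hgeom (CB * φ x) (by positivity)]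
    _ ≤ ENNReal.ofReal ((2*CA + 2*CB) * φ x) := by
        rw [← ENNReal.ofReal_add (by positivity) (by positivity)]
        apply ENNReal.ofReal_le_ofReal
        ring_nf
        exact le_refl _
end

section
/- Let κ: (0,∞) → (0,∞) be a decreasing function whose Laplace transform L[κ] belongs to I_o(−1,0). Then L[κ](λ) ≃ κ(λ^{−1})/λ for all λ > 0; in particular κ ∈ I_o(−1,0). -/
open Real MeasureTheory Set Filter ENNReal

private lemma lap_pt (φ : ℝ → ℝ) {l t c : ℝ} (ht : t ∈ Set.Ioi (0:ℝ)) (hφt : 0 < φ t)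
    (hc : 0 ≤ c) (h : sPhi φ l ≤ ENNReal.ofReal c) : φ (l * t) ≤ c * φ t := by
  have h1 : ENNReal.ofReal (φ (l * t) / φ t) ≤ ENNReal.ofReal c :=
    le_trans (le_iSup₂ (f := fun s (_ : s ∈ Set.Ioi (0:ℝ)) =>
      ENNReal.ofReal (φ (l * s) / φ s)) t ht) h
  rw [ENNReal.ofReal_le_ofReal_iff hc] at h1
  exact (div_le_iff₀ hφt).mp h1

private lemma sPhi_le (φ : ℝ → ℝ) {l c : ℝ} (h : ∀ t > (0:ℝ), φ (l * t) / φ t ≤ c) :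
    sPhi φ l ≤ ENNReal.ofReal c :=
  iSup₂_le fun t ht => ENNReal.ofReal_le_ofReal (h t ht)

/-- The Laplace transform as an abbreviation. -/
private noncomputable def Lf (κ : ℝ → ℝ) (l : ℝ) : ℝ :=
  ∫ t in Set.Ioi (0:ℝ), Real.exp (-(l * t)) * κ t

section Aux
variable (κ : ℝ → ℝ) (hκpos : ∀ t ∈ Set.Ioi (0:ℝ), 0 < κ t)
  (hanti : AntitoneOn κ (Set.Ioi 0))
  (hint : ∀ l > (0:ℝ), IntegrableOn (fun t => Real.exp (-(l * t)) * κ t) (Set.Ioi 0))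

include hint in
private lemma kmeas : AEStronglyMeasurable κ (volume.restrict (Set.Ioi (0:ℝ))) := by
  have h := (hint 1 one_pos).aestronglyMeasurable
  have he : Continuous fun t : ℝ => Real.exp (1 * t) :=
    Real.continuous_exp.comp (continuous_const.mul continuous_id)
  have : κ = fun t => Real.exp (1 * t) * (Real.exp (-(1 * t)) * κ t) := by
    funext t; rw [← mul_assoc, ← Real.exp_add]; simp
  rw [this]
  exact he.aestronglyMeasurable.mul h

include hκpos hint in
private lemma kint {x : ℝ} (hx : 0 < x) : IntegrableOn κ (Set.Ioc 0 x) := by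
  have hg : IntegrableOn (fun t => Real.exp x * (Real.exp (-(1 * t)) * κ t)) (Set.Ioc 0 x) :=
    ((hint 1 one_pos).mono_set Set.Ioc_subset_Ioi_self).const_mul _
  refine hg.mono' ((kmeas κ hint).mono_measure
    (Measure.restrict_mono Set.Ioc_subset_Ioi_self le_rfl)) ?_
  rw [ae_restrict_iff' measurableSet_Ioc]
  refine ae_of_all _ fun t ht => ?_
  have hκt := hκpos t ht.1
  have h1 : (1:ℝ) ≤ Real.exp x * Real.exp (-(1 * t)) := by
    rw [← Real.exp_add]
    apply Real.one_le_exp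
    linarith [ht.2]
  calc ‖κ t‖ = κ t := by rw [Real.norm_eq_abs, abs_of_pos hκt]
    _ ≤ (Real.exp x * Real.exp (-(1 * t))) * κ t := le_mul_of_one_le_left hκt.le h1
    _ = Real.exp x * (Real.exp (-(1 * t)) * κ t) := by ring

include hκpos hanti hint in
private lemma lemA {x : ℝ} (hx : 0 < x) : x * κ x ≤ ∫ t in Set.Ioc 0 x, κ t := by
  have h := setIntegral_mono_on (f := fun _ => κ x) (g := κ)
    (integrableOn_const (by simp [Real.volume_Ioc]))
    (kint κ hκpos hint hx) measurableSet_Ioc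
    (fun t ht => hanti ht.1 hx ht.2)
  simpa [Real.volume_Ioc, ENNReal.toReal_ofReal hx.le, max_eq_left hx.le] using h

include hκpos hanti hint in
private lemma lemB {x : ℝ} (hx : 0 < x) :
    (∫ t in Set.Ioc 0 x, κ t) ≤ Real.exp 1 * Lf κ x⁻¹ := by
  simp only [Lf]
  have hix : 0 < x⁻¹ := inv_pos.2 hx
  have h1 : (∫ t in Set.Ioc 0 x, Real.exp (-1) * κ t)
      ≤ ∫ t in Set.Ioc 0 x, Real.exp (-(x⁻¹ * t)) * κ t := by
    refine setIntegral_mono_on ((kint κ hκpos hint hx).const_mul _)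
      ((hint x⁻¹ hix).mono_set Set.Ioc_subset_Ioi_self) measurableSet_Ioc (fun t ht => ?_)
    have : x⁻¹ * t ≤ 1 := by
      calc x⁻¹ * t ≤ x⁻¹ * x := by nlinarith [ht.2]
        _ = 1 := inv_mul_cancel₀ hx.ne'
    exact mul_le_mul_of_nonneg_right (Real.exp_le_exp.2 (by linarith)) (hκpos t ht.1).le
  have h2 : (∫ t in Set.Ioc 0 x, Real.exp (-(x⁻¹ * t)) * κ t)
      ≤ ∫ t in Set.Ioi (0:ℝ), Real.exp (-(x⁻¹ * t)) * κ t := by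
    refine setIntegral_mono_set (hint x⁻¹ hix) ?_ Set.Ioc_subset_Ioi_self.eventuallyLE
    rw [EventuallyLE, ae_restrict_iff' measurableSet_Ioi]
    exact ae_of_all _ fun t ht => mul_nonneg (Real.exp_pos _).le (hκpos t ht).le
  rw [integral_const_mul] at h1
  have h3 := h1.trans h2
  calc (∫ t in Set.Ioc 0 x, κ t)
      = Real.exp 1 * (Real.exp (-1) * ∫ t in Set.Ioc 0 x, κ t) := by
        rw [← mul_assoc, ← Real.exp_add]; simp
    _ ≤ Real.exp 1 * ∫ t in Set.Ioi (0:ℝ), Real.exp (-(x⁻¹ * t)) * κ t :=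
        mul_le_mul_of_nonneg_left h3 (Real.exp_pos 1).le

include hκpos hanti hint in
private lemma lemC {x : ℝ} (hx : 0 < x) :
    Lf κ x⁻¹ ≤ (∫ t in Set.Ioc 0 x, κ t) + x * κ x := by
  simp only [Lf]
  have hix : 0 < x⁻¹ := inv_pos.2 hx
  have hsplit : (∫ t in Set.Ioi (0:ℝ), Real.exp (-(x⁻¹ * t)) * κ t)
      = (∫ t in Set.Ioc 0 x, Real.exp (-(x⁻¹ * t)) * κ t)
        + ∫ t in Set.Ioi x, Real.exp (-(x⁻¹ * t)) * κ t := by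
    rw [← setIntegral_union Set.Ioc_disjoint_Ioi_same measurableSet_Ioi
      ((hint x⁻¹ hix).mono_set Set.Ioc_subset_Ioi_self)
      ((hint x⁻¹ hix).mono_set (Set.Ioi_subset_Ioi hx.le)),
      Set.Ioc_union_Ioi_eq_Ioi hx.le]
  have hhead : (∫ t in Set.Ioc 0 x, Real.exp (-(x⁻¹ * t)) * κ t) ≤ ∫ t in Set.Ioc 0 x, κ t := by
    refine setIntegral_mono_on ((hint x⁻¹ hix).mono_set Set.Ioc_subset_Ioi_self)
      (kint κ hκpos hint hx) measurableSet_Ioc (fun t ht => ?_)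
    have h1 : Real.exp (-(x⁻¹ * t)) ≤ 1 := by
      rw [← Real.exp_zero]
      apply Real.exp_le_exp.2
      have : 0 ≤ x⁻¹ * t := mul_nonneg hix.le ht.1.le
      linarith
    exact mul_le_of_le_one_left (hκpos t ht.1).le h1
  have htail : (∫ t in Set.Ioi x, Real.exp (-(x⁻¹ * t)) * κ t) ≤ x * κ x := by
    have hc : IntegrableOn (fun t => Real.exp (-(x⁻¹ * t)) * κ x) (Set.Ioi x) := by
      have : IntegrableOn (fun t => Real.exp (-x⁻¹ * t)) (Set.Ioi x) :=
        exp_neg_integrableOn_Ioi x hix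
      simpa [neg_mul, IntegrableOn] using this.mul_const (κ x)
    have h2 : (∫ t in Set.Ioi x, Real.exp (-(x⁻¹ * t)) * κ t)
        ≤ ∫ t in Set.Ioi x, Real.exp (-(x⁻¹ * t)) * κ x := by
      refine setIntegral_mono_on ((hint x⁻¹ hix).mono_set (Set.Ioi_subset_Ioi hx.le)) hc
        measurableSet_Ioi (fun t ht => ?_)
      exact mul_le_mul_of_nonneg_left (hanti hx (lt_trans hx ht) (le_of_lt ht)) (Real.exp_pos _).le
    have h3 : (∫ t in Set.Ioi x, Real.exp (-(x⁻¹ * t))) = x * Real.exp (-1) := by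
      have := integral_comp_mul_left_Ioi (fun s => Real.exp (-s)) x hix
      rw [inv_mul_cancel₀ hx.ne', integral_exp_neg_Ioi, inv_inv, smul_eq_mul] at this
      exact this
    have h4 : (∫ t in Set.Ioi x, Real.exp (-(x⁻¹ * t)) * κ x) = (x * Real.exp (-1)) * κ x := by
      rw [integral_mul_const, h3]
    have hexp1 : Real.exp (-1) ≤ 1 := by
      rw [← Real.exp_zero]; exact Real.exp_le_exp.2 (by norm_num)
    have h5 := h2.trans_eq h4
    nlinarith [(hκpos x hx).le, mul_nonneg hx.le (hκpos x hx).le]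
  linarith [hsplit, hhead, htail]

include hκpos hanti hint in
private lemma lemPos {l : ℝ} (hl : 0 < l) : 0 < Lf κ l := by
  have hx : 0 < l⁻¹ := inv_pos.2 hl
  have h1 := lemA κ hκpos hanti hint hx
  have h2 := lemB κ hκpos hanti hint hx
  rw [inv_inv] at h2
  have h3 : 0 < l⁻¹ * κ l⁻¹ := mul_pos hx (hκpos _ hx)
  nlinarith [Real.exp_pos 1]

include hκpos hanti hint in
private lemma keyC (hL : memIo (Lf κ) (-1) 0) :
    ∃ C : ℝ, Real.exp 1 ≤ C ∧ ∀ x > (0:ℝ), Lf κ x⁻¹ ≤ C * (x * κ x) := by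
  obtain ⟨M, hM⟩ := hL.2 ((4 * Real.exp 1)⁻¹) (by positivity)
  set μ : ℝ := max M 1 + 1 with hμdef
  have hμM : M < μ := lt_of_le_of_lt (le_max_left M 1) (by simp [hμdef])
  have hμ1 : 1 < μ := lt_of_le_of_lt (le_max_right M 1) (by simp [hμdef])
  have hsP := hM μ hμM
  rw [Real.rpow_zero, mul_one] at hsP
  refine ⟨Real.exp 1 + μ, by linarith, fun x hx => ?_⟩
  have hμ0 : 0 < μ := by linarith
  set y : ℝ := μ * x with hydef
  have hy : 0 < y := mul_pos hμ0 hx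
  have hyinv : 0 < y⁻¹ := inv_pos.2 hy
  have hLy : 0 < Lf κ y⁻¹ := lemPos κ hκpos hanti hint hyinv
  have hLx : 0 < Lf κ x⁻¹ := lemPos κ hκpos hanti hint (inv_pos.2 hx)
  have h1 : Lf κ x⁻¹ ≤ (4 * Real.exp 1)⁻¹ * Lf κ y⁻¹ := by
    have h := lap_pt (Lf κ) (Set.mem_Ioi.2 hyinv) hLy (by positivity) hsP
    have heq : μ * y⁻¹ = x⁻¹ := by
      rw [hydef, mul_inv]
      field_simp
    rwa [heq] at h
  have hxy : x ≤ y := by nlinarith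
  have h2 : (∫ t in Set.Ioc 0 y, κ t) ≤ (∫ t in Set.Ioc 0 x, κ t) + (y - x) * κ x := by
    have hsplit : (∫ t in Set.Ioc 0 y, κ t)
        = (∫ t in Set.Ioc 0 x, κ t) + ∫ t in Set.Ioc x y, κ t := by
      rw [← setIntegral_union (Set.Ioc_disjoint_Ioc_of_le le_rfl) measurableSet_Ioc
        (kint κ hκpos hint hx)
        ((kint κ hκpos hint hy).mono_set (Set.Ioc_subset_Ioc_left hx.le)),
        Set.Ioc_union_Ioc_eq_Ioc hx.le hxy]
    have hmid : (∫ t in Set.Ioc x y, κ t) ≤ (y - x) * κ x := by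
      have h := setIntegral_mono_on (f := κ) (g := fun _ => κ x)
        ((kint κ hκpos hint hy).mono_set (Set.Ioc_subset_Ioc_left hx.le))
        (integrableOn_const (by simp [Real.volume_Ioc]))
        measurableSet_Ioc
        (fun t ht => hanti hx (lt_trans hx ht.1) ht.1.le)
      simpa [Real.volume_Ioc, ENNReal.toReal_ofReal (by linarith : (0:ℝ) ≤ y - x),
        max_eq_left (by linarith : (0:ℝ) ≤ y - x)] using h
    linarith
  have h3 : Lf κ y⁻¹ ≤ 2 * ∫ t in Set.Ioc 0 y, κ t := by
    have hc := lemC κ hκpos hanti hint hy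
    have ha := lemA κ hκpos hanti hint hy
    linarith
  have h4 : (∫ t in Set.Ioc 0 x, κ t) ≤ Real.exp 1 * Lf κ x⁻¹ :=
    lemB κ hκpos hanti hint hx
  -- arithmetic
  set E : ℝ := Real.exp 1 with hEdef
  have hE1 : 1 ≤ E := by
    have := Real.add_one_le_exp 1
    simp only [hEdef]; linarith
  set a : ℝ := Lf κ x⁻¹
  set b : ℝ := Lf κ y⁻¹
  have hk : 0 ≤ x * κ x := mul_nonneg hx.le (hκpos x hx).le
  have h1' : 4 * E * a ≤ b := by
    have h := mul_le_mul_of_nonneg_left h1 (by positivity : (0:ℝ) ≤ 4 * E)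
    rwa [← mul_assoc, mul_inv_cancel₀ (by positivity), one_mul] at h
  have hyx : (y - x) * κ x = (μ - 1) * (x * κ x) := by rw [hydef]; ring
  -- b ≤ 2 * (Kx + (μ-1) k), Kx ≤ E a  ⇒  b ≤ 2 E a + 2 (μ-1) k
  have h5 : b ≤ 2 * (E * a) + 2 * ((μ - 1) * (x * κ x)) := by
    have := h2
    rw [hyx] at this
    nlinarith [h3, h4]
  have h6 : E * a ≤ (μ - 1) * (x * κ x) := by nlinarith
  have h7 : a ≤ E * a := le_mul_of_one_le_left hLx.le hE1
  have h8 : (μ - 1) * (x * κ x) ≤ (E + μ) * (x * κ x) := by nlinarith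
  linarith
end Aux
/-- if `κ` is positive and decreasing on `(0,∞)` with Laplace transform
`L[κ]` finite on `(0,∞)` and `L[κ] ∈ I_o(−1,0)`, then `L[κ](λ) ≃ κ(λ⁻¹)/λ` for all
`λ > 0`; in particular `κ ∈ I_o(−1,0)`. -/
theorem laplace_equiv_of_antitone (κ : ℝ → ℝ) (hκpos : ∀ t ∈ Set.Ioi (0:ℝ), 0 < κ t)
    (hanti : AntitoneOn κ (Set.Ioi 0))
    (hint : ∀ l > (0:ℝ), IntegrableOn (fun t => Real.exp (-(l * t)) * κ t) (Set.Ioi 0))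
    (hL : memIo (fun l => ∫ t in Set.Ioi (0:ℝ), Real.exp (-(l * t)) * κ t) (-1) 0) :
    (∃ C > (0:ℝ), ∀ l > (0:ℝ),
      C⁻¹ * (κ l⁻¹ / l) ≤ (∫ t in Set.Ioi (0:ℝ), Real.exp (-(l * t)) * κ t) ∧
      (∫ t in Set.Ioi (0:ℝ), Real.exp (-(l * t)) * κ t) ≤ C * (κ l⁻¹ / l)) ∧
    memIo κ (-1) 0 := by
  have hL' : memIo (Lf κ) (-1) 0 := hL
  obtain ⟨C, hEC, hC⟩ := keyC κ hκpos hanti hint hL'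
  have hE1 : (1:ℝ) ≤ Real.exp 1 := by linarith [Real.add_one_le_exp 1]
  have hCpos : 0 < C := lt_of_lt_of_le (by linarith : (0:ℝ) < Real.exp 1) hEC
  -- upper bound for x * κ x by L
  have hup : ∀ x > (0:ℝ), x * κ x ≤ Real.exp 1 * Lf κ x⁻¹ := fun x hx =>
    (lemA κ hκpos hanti hint hx).trans (lemB κ hκpos hanti hint hx)
  constructor
  · refine ⟨C, hCpos, fun l hl => ?_⟩
    have hx : 0 < l⁻¹ := inv_pos.2 hl
    have hupl : l⁻¹ * κ l⁻¹ ≤ Real.exp 1 * Lf κ l := by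
      have := hup l⁻¹ hx; rwa [inv_inv] at this
    have hlol : Lf κ l ≤ C * (l⁻¹ * κ l⁻¹) := by
      have := hC l⁻¹ hx; rwa [inv_inv] at this
    have hIpos : 0 < Lf κ l := lemPos κ hκpos hanti hint hl
    have hdiv : κ l⁻¹ / l = l⁻¹ * κ l⁻¹ := by rw [div_eq_mul_inv, mul_comm]
    constructor
    · show C⁻¹ * (κ l⁻¹ / l) ≤ Lf κ l
      rw [hdiv]
      have hz : l⁻¹ * κ l⁻¹ ≤ C * Lf κ l :=
        hupl.trans (mul_le_mul_of_nonneg_right hEC hIpos.le)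
      calc C⁻¹ * (l⁻¹ * κ l⁻¹) ≤ C⁻¹ * (C * Lf κ l) :=
            mul_le_mul_of_nonneg_left hz (inv_nonneg.2 hCpos.le)
        _ = Lf κ l := by field_simp
    · show Lf κ l ≤ C * (κ l⁻¹ / l)
      rw [hdiv]; exact hlol
  · -- κ ∈ I_o(-1,0)
    have hratio : ∀ c : ℝ, 0 ≤ c → ∀ l > (0:ℝ), ∀ t > (0:ℝ),
        Lf κ (l * t)⁻¹ ≤ c * Lf κ t⁻¹ → κ (l * t) / κ t ≤ Real.exp 1 * C * c / l := by
      intro c hc l hl t ht hLL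
      have hlt : 0 < l * t := mul_pos hl ht
      have h1 : (l * t) * κ (l * t) ≤ Real.exp 1 * Lf κ (l * t)⁻¹ := hup _ hlt
      have h2 : Lf κ t⁻¹ ≤ C * (t * κ t) := hC t ht
      have h5 : (l * t) * κ (l * t) ≤ Real.exp 1 * (c * (C * (t * κ t))) := by
        calc (l * t) * κ (l * t) ≤ Real.exp 1 * Lf κ (l * t)⁻¹ := h1
          _ ≤ Real.exp 1 * (c * Lf κ t⁻¹) :=
              mul_le_mul_of_nonneg_left hLL (Real.exp_pos 1).le
          _ ≤ Real.exp 1 * (c * (C * (t * κ t))) :=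
              mul_le_mul_of_nonneg_left (mul_le_mul_of_nonneg_left h2 hc) (Real.exp_pos 1).le
      have h7 : κ (l * t) ≤ (Real.exp 1 * (c * (C * (t * κ t)))) / (l * t) := by
        rw [← mul_div_cancel_left₀ (κ (l * t)) hlt.ne']
        gcongr
      have h8 : (Real.exp 1 * (c * (C * (t * κ t)))) / (l * t)
          = (Real.exp 1 * C * c / l) * κ t := by
        field_simp
      exact (div_le_iff₀ (hκpos t ht)).2 (h7.trans_eq h8)
    constructor
    · -- behaviour at 0
      intro ε hε
      set ε2 : ℝ := ε / (Real.exp 1 * C) with hε2def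
      have hε2 : 0 < ε2 := by positivity
      obtain ⟨M2, hM2⟩ := hL'.2 ε2 hε2
      refine ⟨(max M2 1)⁻¹, by positivity, fun l hl0 hlδ => ?_⟩
      apply sPhi_le
      intro t ht
      have hM2l : M2 < l⁻¹ := by
        have h := inv_strictAnti₀ hl0 hlδ
        rw [inv_inv] at h
        exact lt_of_le_of_lt (le_max_left M2 1) h
      have hs := hM2 l⁻¹ hM2l
      rw [Real.rpow_zero, mul_one] at hs
      have hti : (0:ℝ) < t⁻¹ := inv_pos.2 ht
      have hFt : 0 < Lf κ t⁻¹ := lemPos κ hκpos hanti hint hti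
      have hLL := lap_pt (Lf κ) (Set.mem_Ioi.2 hti) hFt hε2.le hs
      rw [← mul_inv] at hLL
      have hr := hratio ε2 hε2.le l hl0 t ht hLL
      have he : Real.exp 1 * C * ε2 / l = ε * l ^ (-1:ℝ) := by
        rw [Real.rpow_neg_one, hε2def]
        field_simp
      rw [← he]
      exact hr
    · -- behaviour at ∞
      intro ε hε
      set ε2 : ℝ := ε / (Real.exp 1 * C) with hε2def
      have hε2 : 0 < ε2 := by positivity
      obtain ⟨δ, hδpos, hδ⟩ := hL'.1 ε2 hε2
      refine ⟨δ⁻¹, fun l hl => ?_⟩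
      have hl0 : 0 < l := lt_trans (inv_pos.2 hδpos) hl
      apply sPhi_le
      intro t ht
      have hinvδ : l⁻¹ < δ := by
        have h := inv_strictAnti₀ (inv_pos.2 hδpos) hl
        rwa [inv_inv] at h
      have hs := hδ l⁻¹ (inv_pos.2 hl0) hinvδ
      rw [Real.rpow_neg_one, inv_inv] at hs
      have hti : (0:ℝ) < t⁻¹ := inv_pos.2 ht
      have hFt : 0 < Lf κ t⁻¹ := lemPos κ hκpos hanti hint hti
      have hLL := lap_pt (Lf κ) (Set.mem_Ioi.2 hti) hFt (by positivity) hs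
      rw [← mul_inv] at hLL
      have hr := hratio (ε2 * l) (by positivity) l hl0 t ht hLL
      have he : Real.exp 1 * C * (ε2 * l) / l = ε * l ^ (0:ℝ) := by
        rw [Real.rpow_zero, mul_one, hε2def]
        field_simp
      rw [← he]
      exact hr
end
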